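/- Let A be a tristochastic n × n × n array all of whose nonzero entries equal 1/2 (so every line contains exactly two entries equal to 1/2). Define the graph G(A) on the support of A where two support elements are adjacent iff they lie on a common line. If no connected component of G(A) is bipartite, then A is a vertex of the polytope of tristochastic arrays. -/

import Mathlib

lemma line_lemma {n : ℕ} (a b c : Fin n → ℝ)
    (ha0 : ∀ t, 0 ≤ a t) (has : ∑ t, a t = 1)
    (hhalf : ∀ t, a t ≠ 0 → a t = 1/2)
    (hz : ∀ t, a t = 0 → b t = 0 ∧ c t = 0)
    (hbs : ∑ t, b t = 1) (hcs : ∑ t, c t = 1)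
    (s t : Fin n) (hst : s ≠ t) (hs : a s ≠ 0) (ht : a t ≠ 0) :
    (b s - c s) + (b t - c t) = 0 := by
  have hvan : ∀ u, u ≠ s → u ≠ t → a u = 0 := by
    intro u hus hut
    by_contra hu
    have h1 : ∑ x ∈ ({s, t, u} : Finset (Fin n)), a x ≤ ∑ x, a x :=
      Finset.sum_le_sum_of_subset_of_nonneg (Finset.subset_univ _) (fun i _ _ => ha0 i)
    have h2 : ∑ x ∈ ({s, t, u} : Finset (Fin n)), a x = 3/2 := by
      rw [Finset.sum_insert (by simp [hst, hus.symm]),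
          Finset.sum_insert (by simp [hut.symm]), Finset.sum_singleton,
          hhalf s hs, hhalf t ht, hhalf u hu]
      norm_num
    rw [h2, has] at h1
    norm_num at h1
  have key : ∀ (f : Fin n → ℝ), (∑ x, f x = 1) → (∀ u, a u = 0 → f u = 0) → f s + f t = 1 := by
    intro f hf hfz
    have h3 : ∑ x ∈ ({s, t} : Finset (Fin n)), f x = ∑ x, f x := by
      apply Finset.sum_subset (Finset.subset_univ _)
      intro u _ hu
      simp only [Finset.mem_insert, Finset.mem_singleton, not_or] at hu
      exact hfz u (hvan u hu.1 hu.2)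
    rw [Finset.sum_insert (by simp [hst]), Finset.sum_singleton] at h3
    rw [h3, hf]
  have hb := key b hbs (fun u h => (hz u h).1)
  have hc := key c hcs (fun u h => (hz u h).2)
  linarith

def IsVertex {V : Type*} [AddCommGroup V] [Module ℝ V] (P : Set V) (A : V) : Prop :=
  A ∈ P ∧ ∀ B ∈ P, ∀ C ∈ P, A = (1 / 2 : ℝ) • (B + C) → B = C

def Tristochastic {n : ℕ} (A : Fin n → Fin n → Fin n → ℝ) : Prop :=
  (∀ i j k, 0 ≤ A i j k) ∧
  (∀ i j, ∑ k, A i j k = 1) ∧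
  (∀ i k, ∑ j, A i j k = 1) ∧
  (∀ j k, ∑ i, A i j k = 1)

/-- The graph `G(A)` on the support of `A`, joining two support elements iff they
lie on a common line (agree in two of the three coordinates). -/
def lineGraph {n : ℕ} (A : Fin n → Fin n → Fin n → ℝ) :
    SimpleGraph {x : Fin n × Fin n × Fin n // A x.1 x.2.1 x.2.2 ≠ 0} where
  Adj x y := x ≠ y ∧
    ((x.1.1 = y.1.1 ∧ x.1.2.1 = y.1.2.1) ∨
     (x.1.1 = y.1.1 ∧ x.1.2.2 = y.1.2.2) ∨
     (x.1.2.1 = y.1.2.1 ∧ x.1.2.2 = y.1.2.2))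
  symm := by
    constructor
    rintro x y ⟨hxy, h⟩
    refine ⟨hxy.symm, ?_⟩
    rcases h with ⟨h1, h2⟩ | ⟨h1, h2⟩ | ⟨h1, h2⟩
    · exact Or.inl ⟨h1.symm, h2.symm⟩
    · exact Or.inr (Or.inl ⟨h1.symm, h2.symm⟩)
    · exact Or.inr (Or.inr ⟨h1.symm, h2.symm⟩)
  loopless := by constructor; rintro x ⟨hx, -⟩; exact hx rfl

/-- If `A` is tristochastic, all nonzero entries of `A` equal `1/2`, and no connected
component of `G(A)` is bipartite, then `A` is a vertex of the tristochastic polytope. -/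
theorem stmt3 {n : ℕ} (A : Fin n → Fin n → Fin n → ℝ)
    (hA : Tristochastic A)
    (hhalf : ∀ i j k, A i j k ≠ 0 → A i j k = 1 / 2)
    (hnobip : ¬ ∃ c : (lineGraph A).ConnectedComponent,
      (SimpleGraph.induce {v | (lineGraph A).connectedComponentMk v = c}
        (lineGraph A)).Colorable 2) :
    IsVertex {B | Tristochastic B} A := by
  obtain ⟨hA0, hA1, hA2, hA3⟩ := hA
  refine ⟨⟨hA0, hA1, hA2, hA3⟩, ?_⟩
  rintro B ⟨hB0, hB1, hB2, hB3⟩ C ⟨hC0, hC1, hC2, hC3⟩ hABC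
  by_contra hBC
  have hpt : ∀ i j k, A i j k = 2⁻¹ * (B i j k + C i j k) := by
    intro i j k
    have := congrFun (congrFun (congrFun hABC i) j) k
    simpa [Pi.smul_apply] using this
  have hzero : ∀ i j k, A i j k = 0 → B i j k = 0 ∧ C i j k = 0 := by
    intro i j k h
    have h2 := hpt i j k
    rw [h] at h2
    constructor <;> nlinarith [hB0 i j k, hC0 i j k]
  set G := lineGraph A with hG
  set f : {x : Fin n × Fin n × Fin n // A x.1 x.2.1 x.2.2 ≠ 0} → ℝ :=
    fun x => B x.1.1 x.1.2.1 x.1.2.2 - C x.1.1 x.1.2.1 x.1.2.2 with hf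
  -- adjacency ⇒ f sums to 0
  have hadj : ∀ x y, G.Adj x y → f x + f y = 0 := by
    rintro ⟨⟨i, j, k⟩, hx⟩ ⟨⟨i', j', k'⟩, hy⟩ ⟨hne, hcase⟩
    simp only [ne_eq, Subtype.mk.injEq, Prod.mk.injEq] at hne hx hy ⊢
    rcases hcase with ⟨h1, h2⟩ | ⟨h1, h2⟩ | ⟨h1, h2⟩
    · -- same i, j; differ in k
      simp only at h1 h2
      subst h1; subst h2
      have hkk : k ≠ k' := by rintro rfl; exact hne ⟨rfl, rfl, rfl⟩
      exact line_lemma (fun t => A i j t) (fun t => B i j t) (fun t => C i j t)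
        (fun t => hA0 i j t) (hA1 i j) (fun t => hhalf i j t)
        (fun t => hzero i j t) (hB1 i j) (hC1 i j) k k' hkk hx hy
    · simp only at h1 h2
      subst h1; subst h2
      have hjj : j ≠ j' := by rintro rfl; exact hne ⟨rfl, rfl, rfl⟩
      exact line_lemma (fun t => A i t k) (fun t => B i t k) (fun t => C i t k)
        (fun t => hA0 i t k) (hA2 i k) (fun t => hhalf i t k)
        (fun t => hzero i t k) (hB2 i k) (hC2 i k) j j' hjj hx hy
    · simp only at h1 h2
      subst h1; subst h2
      have hii : i ≠ i' := by rintro rfl; exact hne ⟨rfl, rfl, rfl⟩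
      exact line_lemma (fun t => A t j k) (fun t => B t j k) (fun t => C t j k)
        (fun t => hA0 t j k) (hA3 j k) (fun t => hhalf t j k)
        (fun t => hzero t j k) (hB3 j k) (hC3 j k) i i' hii hx hy
  -- walks preserve f up to sign
  have hwalk : ∀ (x y : {x : Fin n × Fin n × Fin n // A x.1 x.2.1 x.2.2 ≠ 0})
      (_ : G.Walk x y), f x = f y ∨ f x = -f y := by
    intro x y w
    induction w with
    | nil => exact Or.inl rfl
    | @cons u v w h p ih =>
      have h2 := hadj u v h
      rcases ih with h1 | h1
      · right; linarith
      · left; linarith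
  -- find v₀ with f v₀ ≠ 0
  have hex : ∃ v : {x : Fin n × Fin n × Fin n // A x.1 x.2.1 x.2.2 ≠ 0}, f v ≠ 0 := by
    by_contra hall
    push_neg at hall
    apply hBC
    funext i j k
    by_cases h : A i j k = 0
    · rw [(hzero i j k h).1, (hzero i j k h).2]
    · have := hall ⟨(i, j, k), h⟩
      simp only [hf] at this
      linarith
  obtain ⟨v₀, hv₀⟩ := hex
  apply hnobip
  refine ⟨G.connectedComponentMk v₀, ?_⟩
  refine ⟨SimpleGraph.Coloring.mk (fun v => if 0 < f v.1 then 0 else 1) ?_⟩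
  rintro ⟨v, hv⟩ ⟨w, hw⟩ hadj'
  have hvw : G.Adj v w := hadj'
  have hsum := hadj v w hvw
  -- f v ≠ 0 since v is in component of v₀
  have hfv : f v ≠ 0 := by
    have hr : G.Reachable v v₀ := (SimpleGraph.ConnectedComponent.eq).mp hv
    obtain ⟨p⟩ := hr
    rcases hwalk v v₀ p with h | h <;> rw [h] <;> simpa using hv₀
  rcases lt_trichotomy (f v) 0 with h | h | h
  · have : 0 < f w := by linarith
    simp [h.not_gt, this]
  · exact absurd h hfv
  · have : ¬ 0 < f w := by intro h2; linarith
    simp [h, this]
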